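/- Under the admissible-error assumption, the MOPO policy π̂ satisfies η_M(π̂) ≥ η_M(π*) − 2λ·ε_u(π*), where π* is an optimal policy for the true MDP M. In particular, if u(s,a) = 0 for all (s,a) visited under ρ^{π*}_{T̂}, then η_M(π̂) = η_M(π*). -/

import Mathlib

open scoped BigOperators
open Filter Topology Classical

section MDP

variable {S A : Type*} [Fintype S] [Fintype A]

/-- π is a valid stochastic policy. -/
def IsPolicy (π : S → A → ℝ) : Prop :=
  (∀ s a, 0 ≤ π s a) ∧ ∀ s, ∑ a, π s a = 1

/-- T is a valid transition kernel. -/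
def IsKernel (T : S → A → S → ℝ) : Prop :=
  (∀ s a s', 0 ≤ T s a s') ∧ ∀ s a, ∑ s', T s a s' = 1

/-- μ is a probability distribution on states. -/
def IsDist (μ : S → ℝ) : Prop :=
  (∀ s, 0 ≤ μ s) ∧ ∑ s, μ s = 1

/-- Distribution of the state at time t under policy π and dynamics T, from μ0. -/
def stateDist (T : S → A → S → ℝ) (π : S → A → ℝ) (μ0 : S → ℝ) : ℕ → S → ℝ
  | 0 => μ0
  | t + 1 => fun s' => ∑ s, ∑ a, stateDist T π μ0 t s * π s a * T s a s'

/-- Unnormalized discounted occupancy measure ρ^π_T(s,a). -/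
noncomputable def occupancy (γ : ℝ) (T : S → A → S → ℝ) (π : S → A → ℝ)
    (μ0 : S → ℝ) (s : S) (a : A) : ℝ :=
  π s a * ∑' t : ℕ, γ ^ t * stateDist T π μ0 t s

/-- Improper expectation Ē of f with respect to the occupancy measure. -/
noncomputable def expOcc (γ : ℝ) (T : S → A → S → ℝ) (π : S → A → ℝ)
    (μ0 : S → ℝ) (f : S → A → ℝ) : ℝ :=
  ∑ s, ∑ a, occupancy γ T π μ0 s a * f s a

/-- Expected discounted return η_M(π). -/
noncomputable def ret (γ : ℝ) (T : S → A → S → ℝ) (π : S → A → ℝ)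
    (μ0 : S → ℝ) (r : S → A → ℝ) : ℝ :=
  ∑' t : ℕ, γ ^ t * ∑ s, ∑ a, stateDist T π μ0 t s * π s a * r s a

/-- Value function V_M^π(s): return starting from the Dirac distribution at s. -/
noncomputable def value (γ : ℝ) (T : S → A → S → ℝ) (π : S → A → ℝ)
    (r : S → A → ℝ) (s0 : S) : ℝ :=
  ret γ T π (fun s => if s = s0 then 1 else 0) r

/-- G^π(s,a) = E_{s'∼T̂(s,a)}[V_M^π(s')] − E_{s'∼T(s,a)}[V_M^π(s')]. -/
noncomputable def Gpi (γ : ℝ) (T Th : S → A → S → ℝ) (π : S → A → ℝ)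
    (r : S → A → ℝ) (s : S) (a : A) : ℝ :=
  (∑ s', Th s a s' * value γ T π r s') - ∑ s', T s a s' * value γ T π r s'

/-- Total variation distance between two distributions on a finite set. -/
noncomputable def tvDist (P Q : S → ℝ) : ℝ :=
  ⨆ E : Finset S, |(∑ s ∈ E, P s) - ∑ s ∈ E, Q s|

/-- Integral probability metric induced by a function class F. -/
noncomputable def ipm (F : Set (S → ℝ)) (P Q : S → ℝ) : ℝ :=
  sSup {x : ℝ | ∃ f ∈ F, x = |(∑ s, P s * f s) - ∑ s, Q s * f s|}



lemma sum_rot {X Y Z M : Type*} [Fintype X] [Fintype Y] [Fintype Z] [AddCommMonoid M]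
    (g : X → Y → Z → M) :
    (∑ x, ∑ y, ∑ z, g x y z) = ∑ z, ∑ x, ∑ y, g x y z := by
  calc (∑ x, ∑ y, ∑ z, g x y z) = ∑ x, ∑ z, ∑ y, g x y z :=
        Finset.sum_congr rfl fun x _ => Finset.sum_comm
    _ = ∑ z, ∑ x, ∑ y, g x y z := Finset.sum_comm

/-- one-step pushforward -/
def mstep (T : S → A → S → ℝ) (π : S → A → ℝ) (μ : S → ℝ) (s' : S) : ℝ :=
  ∑ s, ∑ a, μ s * π s a * T s a s'

lemma stateDist_succ' (T : S → A → S → ℝ) (π : S → A → ℝ) (μ : S → ℝ) (t : ℕ) :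
    stateDist T π μ (t + 1) = stateDist T π (mstep T π μ) t := by
  induction t with
  | zero => rfl
  | succ t ih =>
      funext s'
      show (∑ s, ∑ a, stateDist T π μ (t + 1) s * π s a * T s a s') = _
      rw [ih]; rfl

lemma isDist_mstep {T : S → A → S → ℝ} {π : S → A → ℝ} {μ : S → ℝ}
    (hT : IsKernel T) (hπ : IsPolicy π) (hμ : IsDist μ) : IsDist (mstep T π μ) := by
  constructor
  · intro s'
    exact Finset.sum_nonneg fun s _ => Finset.sum_nonneg fun a _ =>
      mul_nonneg (mul_nonneg (hμ.1 s) (hπ.1 s a)) (hT.1 s a s')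
  · have h : ∀ s, ∑ s', ∑ a, μ s * π s a * T s a s' = μ s := by
      intro s
      rw [Finset.sum_comm]
      calc ∑ a, ∑ s', μ s * π s a * T s a s' = ∑ a, μ s * π s a := by
            refine Finset.sum_congr rfl fun a _ => ?_
            rw [← Finset.mul_sum, hT.2 s a, mul_one]
        _ = μ s := by rw [← Finset.mul_sum, hπ.2 s, mul_one]
    calc ∑ s', mstep T π μ s' = ∑ s, ∑ s', ∑ a, μ s * π s a * T s a s' := by
          simp only [mstep]; exact Finset.sum_comm
      _ = ∑ s, μ s := Finset.sum_congr rfl fun s _ => h s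
      _ = 1 := hμ.2

lemma isDist_stateDist {T : S → A → S → ℝ} {π : S → A → ℝ} {μ : S → ℝ}
    (hT : IsKernel T) (hπ : IsPolicy π) (hμ : IsDist μ) (t : ℕ) :
    IsDist (stateDist T π μ t) := by
  induction t generalizing μ with
  | zero => exact hμ
  | succ t ih => rw [stateDist_succ']; exact ih (isDist_mstep hT hπ hμ)

lemma dist_le_one {μ : S → ℝ} (hμ : IsDist μ) (s : S) : μ s ≤ 1 := by
  have := Finset.single_le_sum (f := μ) (fun i _ => hμ.1 i) (Finset.mem_univ s)
  rwa [hμ.2] at this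

lemma absSum_le {X : Type*} [Fintype X] {μ : X → ℝ} (h0 : ∀ x, 0 ≤ μ x)
    (h1 : ∑ x, μ x = 1) (f : X → ℝ) : |∑ x, μ x * f x| ≤ ∑ x, |f x| := by
  calc |∑ x, μ x * f x| ≤ ∑ x, |μ x * f x| := Finset.abs_sum_le_sum_abs _ _
    _ ≤ ∑ x, |f x| := by
        refine Finset.sum_le_sum fun x _ => ?_
        rw [abs_mul, abs_of_nonneg (h0 x)]
        exact mul_le_of_le_one_left (abs_nonneg _) (dist_le_one ⟨h0, h1⟩ x)

lemma inner_abs_le {μ : S → ℝ} {π : S → A → ℝ} (hμ : IsDist μ) (hπ : IsPolicy π)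
    (f : S → A → ℝ) : |∑ s, ∑ a, μ s * π s a * f s a| ≤ ∑ s, ∑ a, |f s a| := by
  have h : (∑ s, ∑ a, μ s * π s a * f s a) = ∑ s, μ s * ∑ a, π s a * f s a := by
    refine Finset.sum_congr rfl fun s _ => ?_
    rw [Finset.mul_sum]; exact Finset.sum_congr rfl fun a _ => by ring
  rw [h]
  calc |∑ s, μ s * ∑ a, π s a * f s a| ≤ ∑ s, |∑ a, π s a * f s a| := absSum_le hμ.1 hμ.2 _
    _ ≤ ∑ s, ∑ a, |f s a| := Finset.sum_le_sum fun s _ => absSum_le (hπ.1 s) (hπ.2 s) _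

lemma summable_geom_mul {γ : ℝ} (hγ0 : 0 ≤ γ) (hγ1 : γ < 1) {g : ℕ → ℝ} {C : ℝ}
    (hg : ∀ t, |g t| ≤ C) : Summable fun t => γ ^ t * g t := by
  refine Summable.of_norm_bounded
    ((summable_geometric_of_lt_one hγ0 hγ1).mul_right C) fun t => ?_
  rw [Real.norm_eq_abs, abs_mul, abs_pow, abs_of_nonneg hγ0]
  exact mul_le_mul_of_nonneg_left (hg t) (pow_nonneg hγ0 t)

lemma summable_ret {γ : ℝ} (hγ0 : 0 ≤ γ) (hγ1 : γ < 1) {T : S → A → S → ℝ}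
    {π : S → A → ℝ} {μ : S → ℝ} (hT : IsKernel T) (hπ : IsPolicy π) (hμ : IsDist μ)
    (f : S → A → ℝ) :
    Summable fun t => γ ^ t * ∑ s, ∑ a, stateDist T π μ t s * π s a * f s a :=
  summable_geom_mul hγ0 hγ1 (C := ∑ s, ∑ a, |f s a|)
    (fun t => inner_abs_le (isDist_stateDist hT hπ hμ t) hπ f)

lemma stateDist_dirac (T : S → A → S → ℝ) (π : S → A → ℝ) (μ : S → ℝ) (t : ℕ) (s : S) :
    stateDist T π μ t s
      = ∑ s0, μ s0 * stateDist T π (fun x => if x = s0 then 1 else 0) t s := by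
  induction t generalizing s with
  | zero => simp [stateDist, mul_ite, eq_comm]
  | succ t ih =>
      show (∑ s1, ∑ a, stateDist T π μ t s1 * π s1 a * T s1 a s) = _
      calc ∑ s1, ∑ a, stateDist T π μ t s1 * π s1 a * T s1 a s
          = ∑ s1, ∑ a, ∑ s0, μ s0 *
              (stateDist T π (fun x => if x = s0 then 1 else 0) t s1 * π s1 a * T s1 a s) := by
            refine Finset.sum_congr rfl fun s1 _ => Finset.sum_congr rfl fun a _ => ?_
            rw [ih s1, Finset.sum_mul, Finset.sum_mul]
            exact Finset.sum_congr rfl fun s0 _ => by ring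
        _ = ∑ s0, μ s0 * ∑ s1, ∑ a,
              stateDist T π (fun x => if x = s0 then 1 else 0) t s1 * π s1 a * T s1 a s := by
            rw [sum_rot]
            refine Finset.sum_congr rfl fun s0 _ => ?_
            rw [Finset.mul_sum]
            refine Finset.sum_congr rfl fun s1 _ => ?_
            rw [Finset.mul_sum]

lemma ret_eq_sum_value {γ : ℝ} (hγ0 : 0 ≤ γ) (hγ1 : γ < 1) {T : S → A → S → ℝ}
    {π : S → A → ℝ} {μ : S → ℝ} (hT : IsKernel T) (hπ : IsPolicy π) (hμ : IsDist μ)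
    (r : S → A → ℝ) :
    ret γ T π μ r = ∑ s0, μ s0 * value γ T π r s0 := by
  have hdirac : ∀ s0 : S, IsDist (fun x : S => if x = s0 then (1:ℝ) else 0) := by
    intro s0
    constructor
    · intro x; by_cases h : x = s0 <;> simp [h]
    · simp
  have key : ∀ t : ℕ, γ ^ t * ∑ s, ∑ a, stateDist T π μ t s * π s a * r s a
      = ∑ s0, μ s0 * (γ ^ t * ∑ s, ∑ a,
          stateDist T π (fun x => if x = s0 then 1 else 0) t s * π s a * r s a) := by
    intro t
    have h1 : (∑ s, ∑ a, stateDist T π μ t s * π s a * r s a)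
        = ∑ s0, μ s0 * ∑ s, ∑ a,
            stateDist T π (fun x => if x = s0 then 1 else 0) t s * π s a * r s a := by
      calc (∑ s, ∑ a, stateDist T π μ t s * π s a * r s a)
          = ∑ s, ∑ a, ∑ s0, μ s0 *
              (stateDist T π (fun x => if x = s0 then 1 else 0) t s * π s a * r s a) := by
            refine Finset.sum_congr rfl fun s _ => Finset.sum_congr rfl fun a _ => ?_
            rw [stateDist_dirac T π μ t s, Finset.sum_mul, Finset.sum_mul]
            exact Finset.sum_congr rfl fun s0 _ => by ring
        _ = _ := by
            rw [sum_rot]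
            refine Finset.sum_congr rfl fun s0 _ => ?_
            rw [Finset.mul_sum]
            refine Finset.sum_congr rfl fun s _ => ?_
            rw [Finset.mul_sum]
    rw [h1, Finset.mul_sum]
    exact Finset.sum_congr rfl fun s0 _ => by ring
  rw [ret, tsum_congr key,
    Summable.tsum_finsetSum (fun s0 _ => ((summable_ret hγ0 hγ1 hT hπ (hdirac s0) r).mul_left (μ s0)))]
  exact Finset.sum_congr rfl fun s0 _ => tsum_mul_left

lemma ret_bellman {γ : ℝ} (hγ0 : 0 ≤ γ) (hγ1 : γ < 1) {T : S → A → S → ℝ}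
    {π : S → A → ℝ} {μ : S → ℝ} (hT : IsKernel T) (hπ : IsPolicy π) (hμ : IsDist μ)
    (r : S → A → ℝ) :
    ret γ T π μ r = (∑ s, ∑ a, μ s * π s a * r s a) + γ * ret γ T π (mstep T π μ) r := by
  rw [ret, Summable.tsum_eq_zero_add (summable_ret hγ0 hγ1 hT hπ hμ r)]
  congr 1
  · simp [stateDist]
  · rw [ret, ← tsum_mul_left]
    refine tsum_congr fun t => ?_
    rw [stateDist_succ', pow_succ]
    ring

lemma tsum_exchange {γ : ℝ} (hγ0 : 0 ≤ γ) (hγ1 : γ < 1) {T : S → A → S → ℝ}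
    {π : S → A → ℝ} {μ : S → ℝ} (hT : IsKernel T) (hπ : IsPolicy π) (hμ : IsDist μ)
    (f : S → A → ℝ) :
    (∑' t : ℕ, γ ^ t * ∑ s, ∑ a, stateDist T π μ t s * π s a * f s a)
      = ∑ s, ∑ a, occupancy γ T π μ s a * f s a := by
  have hbd : ∀ s t, |stateDist T π μ t s| ≤ 1 := fun s t => by
    have hd := isDist_stateDist hT hπ hμ t
    rw [abs_of_nonneg (hd.1 s)]; exact dist_le_one hd s
  have hsumm : ∀ s : S, Summable fun t : ℕ => γ ^ t * stateDist T π μ t s :=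
    fun s => summable_geom_mul hγ0 hγ1 (C := 1) (fun t => hbd s t)
  calc (∑' t : ℕ, γ ^ t * ∑ s, ∑ a, stateDist T π μ t s * π s a * f s a)
      = ∑' t : ℕ, ∑ s, ∑ a, (π s a * f s a) * (γ ^ t * stateDist T π μ t s) := by
        refine tsum_congr fun t => ?_
        rw [Finset.mul_sum]
        refine Finset.sum_congr rfl fun s _ => ?_
        rw [Finset.mul_sum]
        exact Finset.sum_congr rfl fun a _ => by ring
    _ = ∑ s, ∑ a, ∑' t : ℕ, (π s a * f s a) * (γ ^ t * stateDist T π μ t s) := by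
        rw [Summable.tsum_finsetSum (fun s _ => summable_sum
          (fun a _ => (hsumm s).mul_left (π s a * f s a)))]
        exact Finset.sum_congr rfl fun s _ =>
          Summable.tsum_finsetSum (fun a _ => (hsumm s).mul_left (π s a * f s a))
    _ = ∑ s, ∑ a, occupancy γ T π μ s a * f s a := by
        refine Finset.sum_congr rfl fun s _ => Finset.sum_congr rfl fun a _ => ?_
        rw [tsum_mul_left, occupancy]
        ring

lemma ret_eq_expOcc {γ : ℝ} (hγ0 : 0 ≤ γ) (hγ1 : γ < 1) {T : S → A → S → ℝ}
    {π : S → A → ℝ} {μ : S → ℝ} (hT : IsKernel T) (hπ : IsPolicy π) (hμ : IsDist μ)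
    (f : S → A → ℝ) : ret γ T π μ f = expOcc γ T π μ f :=
  tsum_exchange hγ0 hγ1 hT hπ hμ f


lemma mstep_inner (T' : S → A → S → ℝ) (π : S → A → ℝ) (μ : S → ℝ) (V : S → ℝ) :
    (∑ s', mstep T' π μ s' * V s')
      = ∑ s, ∑ a, μ s * π s a * ∑ s', T' s a s' * V s' := by
  simp only [mstep, Finset.sum_mul]
  rw [← sum_rot]
  refine Finset.sum_congr rfl fun s _ => Finset.sum_congr rfl fun a _ => ?_
  rw [Finset.mul_sum]
  exact Finset.sum_congr rfl fun s' _ => by ring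

lemma sum_sum_sub (f g : S → A → ℝ) (w : S → A → ℝ) :
    (∑ s, ∑ a, w s a * (f s a - g s a))
      = (∑ s, ∑ a, w s a * f s a) - ∑ s, ∑ a, w s a * g s a := by
  rw [← Finset.sum_sub_distrib]
  refine Finset.sum_congr rfl fun s _ => ?_
  rw [← Finset.sum_sub_distrib]
  exact Finset.sum_congr rfl fun a _ => by ring

lemma simulation {γ : ℝ} (hγ0 : 0 < γ) (hγ1 : γ < 1) {T Th : S → A → S → ℝ}
    {π : S → A → ℝ} {μ0 : S → ℝ} (hT : IsKernel T) (hTh : IsKernel Th)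
    (hπ : IsPolicy π) (hμ : IsDist μ0) (r : S → A → ℝ) :
    ret γ Th π μ0 r - ret γ T π μ0 r
      = γ * expOcc γ Th π μ0 (Gpi γ T Th π r) := by
  set V : S → ℝ := value γ T π r with hV
  have hd : ∀ t, IsDist (stateDist Th π μ0 t) := isDist_stateDist hTh hπ hμ
  set b : ℕ → ℝ := fun t => γ ^ t * ∑ s, stateDist Th π μ0 t s * V s with hbdef
  have hb : Summable b :=
    summable_geom_mul hγ0.le hγ1 (C := ∑ s, |V s|)
      (fun t => absSum_le (hd t).1 (hd t).2 V)
  have hb' : Summable fun t => b (t + 1) := (summable_nat_add_iff 1).2 hb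
  have htel : (∑' t : ℕ, (b t - b (t + 1))) = b 0 := by
    rw [Summable.tsum_sub hb hb', Summable.tsum_eq_zero_add hb]; ring
  have key : ∀ t : ℕ,
      γ ^ t * (∑ s, ∑ a, stateDist Th π μ0 t s * π s a * r s a) - (b t - b (t + 1))
        = γ ^ (t + 1) * ∑ s, ∑ a, stateDist Th π μ0 t s * π s a * Gpi γ T Th π r s a := by
    intro t
    have e1 : (∑ s, stateDist Th π μ0 t s * V s)
        = (∑ s, ∑ a, stateDist Th π μ0 t s * π s a * r s a)
          + γ * ∑ s, ∑ a, stateDist Th π μ0 t s * π s a * ∑ s', T s a s' * V s' := by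
      rw [← ret_eq_sum_value hγ0.le hγ1 hT hπ (hd t) r,
        ret_bellman hγ0.le hγ1 hT hπ (hd t) r,
        ret_eq_sum_value hγ0.le hγ1 hT hπ (isDist_mstep hT hπ (hd t)) r, mstep_inner]
    have e2 : (∑ s, stateDist Th π μ0 (t + 1) s * V s)
        = ∑ s, ∑ a, stateDist Th π μ0 t s * π s a * ∑ s', Th s a s' * V s' := by
      have : stateDist Th π μ0 (t + 1) = mstep Th π (stateDist Th π μ0 t) := rfl
      rw [this, mstep_inner]
    have e3 : (∑ s, ∑ a, stateDist Th π μ0 t s * π s a * Gpi γ T Th π r s a)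
        = (∑ s, ∑ a, stateDist Th π μ0 t s * π s a * ∑ s', Th s a s' * V s')
          - ∑ s, ∑ a, stateDist Th π μ0 t s * π s a * ∑ s', T s a s' * V s' := by
      rw [← sum_sum_sub]
      rfl
    simp only [hbdef]
    rw [e1, e2, e3, pow_succ]
    ring
  have hsumG : Summable fun t : ℕ =>
      γ ^ t * ∑ s, ∑ a, stateDist Th π μ0 t s * π s a * Gpi γ T Th π r s a :=
    summable_ret hγ0.le hγ1 hTh hπ hμ _
  have hsumR : Summable fun t : ℕ =>
      γ ^ t * ∑ s, ∑ a, stateDist Th π μ0 t s * π s a * r s a :=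
    summable_ret hγ0.le hγ1 hTh hπ hμ _
  have hret0 : ret γ T π μ0 r = b 0 := by
    simp only [hbdef, pow_zero, one_mul]
    exact ret_eq_sum_value hγ0.le hγ1 hT hπ hμ r
  calc ret γ Th π μ0 r - ret γ T π μ0 r
      = (∑' t : ℕ, γ ^ t * ∑ s, ∑ a, stateDist Th π μ0 t s * π s a * r s a)
          - ∑' t : ℕ, (b t - b (t + 1)) := by rw [htel, ← hret0]; rfl
    _ = ∑' t : ℕ, (γ ^ t * (∑ s, ∑ a, stateDist Th π μ0 t s * π s a * r s a)
          - (b t - b (t + 1))) := (Summable.tsum_sub hsumR (hb.sub hb')).symm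
    _ = ∑' t : ℕ, γ * (γ ^ t * ∑ s, ∑ a,
            stateDist Th π μ0 t s * π s a * Gpi γ T Th π r s a) := by
          refine tsum_congr fun t => ?_
          rw [key t, pow_succ]; ring
    _ = γ * ∑' t : ℕ, γ ^ t * ∑ s, ∑ a,
            stateDist Th π μ0 t s * π s a * Gpi γ T Th π r s a := tsum_mul_left
    _ = γ * expOcc γ Th π μ0 (Gpi γ T Th π r) := by
          rw [tsum_exchange hγ0.le hγ1 hTh hπ hμ]; rfl

lemma occupancy_nonneg {γ : ℝ} (hγ0 : 0 ≤ γ) {Th : S → A → S → ℝ}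
    {π : S → A → ℝ} {μ0 : S → ℝ} (hTh : IsKernel Th) (hπ : IsPolicy π) (hμ : IsDist μ0)
    (s : S) (a : A) : 0 ≤ occupancy γ Th π μ0 s a :=
  mul_nonneg (hπ.1 s a) (tsum_nonneg fun t =>
    mul_nonneg (pow_nonneg hγ0 t) ((isDist_stateDist hTh hπ hμ t).1 s))

lemma expOcc_abs_le {γ : ℝ} (hγ0 : 0 ≤ γ) {Th : S → A → S → ℝ}
    {π : S → A → ℝ} {μ0 : S → ℝ} (hTh : IsKernel Th) (hπ : IsPolicy π) (hμ : IsDist μ0)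
    {f g : S → A → ℝ} (h : ∀ s a, |f s a| ≤ g s a) :
    |expOcc γ Th π μ0 f| ≤ expOcc γ Th π μ0 g := by
  calc |expOcc γ Th π μ0 f| ≤ ∑ s, ∑ a, |occupancy γ Th π μ0 s a * f s a| := by
        refine le_trans (Finset.abs_sum_le_sum_abs _ _) ?_
        exact Finset.sum_le_sum fun s _ => Finset.abs_sum_le_sum_abs _ _
    _ ≤ expOcc γ Th π μ0 g := by
        refine Finset.sum_le_sum fun s _ => Finset.sum_le_sum fun a _ => ?_
        rw [abs_mul, abs_of_nonneg (occupancy_nonneg hγ0 hTh hπ hμ s a)]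
        exact mul_le_mul_of_nonneg_left (h s a)
          (occupancy_nonneg hγ0 hTh hπ hμ s a)

lemma expOcc_sub_smul {γ : ℝ} {Th : S → A → S → ℝ} {π : S → A → ℝ} {μ0 : S → ℝ}
    (r u : S → A → ℝ) (lam : ℝ) :
    expOcc γ Th π μ0 (fun s a => r s a - lam * u s a)
      = expOcc γ Th π μ0 r - lam * expOcc γ Th π μ0 u := by
  simp only [expOcc, Finset.mul_sum]
  rw [← Finset.sum_sub_distrib]
  refine Finset.sum_congr rfl fun s _ => ?_
  rw [← Finset.sum_sub_distrib]
  exact Finset.sum_congr rfl fun a _ => by ring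

lemma expOcc_const_mul {γ : ℝ} {Th : S → A → S → ℝ} {π : S → A → ℝ} {μ0 : S → ℝ}
    (f : S → A → ℝ) (c : ℝ) :
    expOcc γ Th π μ0 (fun s a => c * f s a) = c * expOcc γ Th π μ0 f := by
  simp only [expOcc, Finset.mul_sum]
  refine Finset.sum_congr rfl fun s _ => Finset.sum_congr rfl fun a _ => by ring

/-- Comparison with the optimal policy: η_M(π̂) ≥ η_M(π*) − 2λ·ε_u(π*), with equality of
returns when u vanishes on the support of ρ^{π*}_T̂. -/
theorem mopo_vs_optimal (γ : ℝ) (hγ0 : 0 < γ) (hγ1 : γ < 1)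
    (T Th : S → A → S → ℝ) (hT : IsKernel T) (hTh : IsKernel Th)
    (μ0 : S → ℝ) (hμ : IsDist μ0) (r : S → A → ℝ)
    (u : S → A → ℝ) (hu : ∀ s a, 0 ≤ u s a) (lam : ℝ) (hlam : 0 < lam)
    (hadm : ∀ π : S → A → ℝ, IsPolicy π → ∀ s a, γ * |Gpi γ T Th π r s a| ≤ lam * u s a)
    (πhat : S → A → ℝ) (hπhat : IsPolicy πhat)
    (hopt : ∀ π : S → A → ℝ, IsPolicy π →
      expOcc γ Th π μ0 (fun s a => r s a - lam * u s a)
        ≤ expOcc γ Th πhat μ0 (fun s a => r s a - lam * u s a))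
    (πstar : S → A → ℝ) (hπstar : IsPolicy πstar)
    (hstaropt : ∀ π : S → A → ℝ, IsPolicy π → ret γ T π μ0 r ≤ ret γ T πstar μ0 r) :
    ret γ T πhat μ0 r ≥ ret γ T πstar μ0 r - 2 * lam * expOcc γ Th πstar μ0 u ∧
      ((∀ s a, occupancy γ Th πstar μ0 s a ≠ 0 → u s a = 0) →
        ret γ T πhat μ0 r = ret γ T πstar μ0 r) := by
  have hγn : (0:ℝ) ≤ γ := hγ0.le
  have hbound : ∀ π : S → A → ℝ, IsPolicy π →
      |γ * expOcc γ Th π μ0 (Gpi γ T Th π r)| ≤ lam * expOcc γ Th π μ0 u := by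
    intro π hπ
    rw [← expOcc_const_mul]
    have h := expOcc_abs_le hγn hTh hπ hμ (f := fun s a => γ * Gpi γ T Th π r s a)
      (g := fun s a => lam * u s a) (fun s a => by
        rw [abs_mul, abs_of_nonneg hγn]; exact hadm π hπ s a)
    rwa [expOcc_const_mul u lam] at h
  have simhat := simulation hγ0 hγ1 hT hTh hπhat hμ r
  have simstar := simulation hγ0 hγ1 hT hTh hπstar hμ r
  have bhat := hbound πhat hπhat
  have bstar := hbound πstar hπstar
  rw [abs_le] at bhat bstar
  have rethat := ret_eq_expOcc hγn hγ1 hTh hπhat hμ r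
  have retstar := ret_eq_expOcc hγn hγ1 hTh hπstar hμ r
  have hopt' := hopt πstar hπstar
  rw [expOcc_sub_smul, expOcc_sub_smul] at hopt'
  have part1 : ret γ T πhat μ0 r
      ≥ ret γ T πstar μ0 r - 2 * lam * expOcc γ Th πstar μ0 u := by
    linarith [bhat.1, bhat.2, bstar.1, bstar.2]
  refine ⟨part1, fun h0 => ?_⟩
  have hU0 : expOcc γ Th πstar μ0 u = 0 := by
    unfold expOcc
    refine Finset.sum_eq_zero fun s _ => Finset.sum_eq_zero fun a _ => ?_
    by_cases hocc : occupancy γ Th πstar μ0 s a = 0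
    · rw [hocc, zero_mul]
    · rw [h0 s a hocc, mul_zero]
  have hle := hstaropt πhat hπhat
  rw [hU0] at part1
  linarith [part1, hle]

end MDP
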